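/- For every integer s ≥ 0, the space (ℙ_s)² of ℝ²-valued polynomial vector fields of degree ≤ s decomposes as the direct sum of grad(ℙ_{s+1}) and x^⊥·ℙ_{s-1} := {x ↦ p(x)·(-x₂, x₁) : p ∈ ℙ_{s-1}}, where ℙ_{-1} = {0}. -/

import Mathlib

open MvPolynomial

noncomputable section

abbrev P2 := MvPolynomial (Fin 2) ℝ

lemma dsum (d : Fin 2 →₀ ℕ) : (d.sum fun _ e => e) = d 0 + d 1 := by
  rw [Finsupp.sum_fintype _ _ (fun _ => rfl)]
  exact Fin.sum_univ_two _

lemma ddeg (d : Fin 2 →₀ ℕ) : d.degree = d 0 + d 1 := by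
  rw [Finsupp.degree, ← dsum d]; rfl

lemma tdeg_le {p : P2} {n : ℕ} :
    p.totalDegree ≤ n ↔ ∀ d : Fin 2 →₀ ℕ, coeff d p ≠ 0 → d 0 + d 1 ≤ n := by
  rw [totalDegree, Finset.sup_le_iff]
  constructor
  · intro h d hd
    simpa [dsum] using h d (mem_support_iff.2 hd)
  · intro h d hd
    simpa [dsum] using h d (mem_support_iff.1 hd)

lemma X_mul_pderiv_monomial (i : Fin 2) (s : Fin 2 →₀ ℕ) (a : ℝ) :
    X i * pderiv i (monomial s a) = monomial s (a * s i) := by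
  rw [pderiv_monomial]
  rcases Nat.eq_zero_or_pos (s i) with h | h
  · simp [h]
  · have hle : Finsupp.single i 1 ≤ s := by
      rw [Finsupp.single_le_iff]; exact h
    rw [X, monomial_mul, one_mul, add_tsub_cancel_of_le hle]

lemma coeff_X_mul_pderiv (i : Fin 2) (q : P2) (d : Fin 2 →₀ ℕ) :
    coeff d (X i * pderiv i q) = coeff d q * d i := by
  conv_lhs => rw [← support_sum_monomial_coeff q]
  rw [map_sum, Finset.mul_sum]
  simp_rw [X_mul_pderiv_monomial, coeff_sum, coeff_monomial]
  rw [Finset.sum_ite_eq' q.support d fun s => coeff s q * (s i : ℝ)]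
  split_ifs with h
  · rfl
  · rw [notMem_support_iff.1 h, zero_mul]

lemma coeff_pderiv (i : Fin 2) (q : P2) (d : Fin 2 →₀ ℕ) :
    coeff d (pderiv i q) = coeff (Finsupp.single i 1 + d) q * (d i + 1) := by
  have h1 : coeff d (pderiv i q) = coeff (Finsupp.single i 1 + d) (X i * pderiv i q) :=
    (coeff_X_mul d i (pderiv i q)).symm
  rw [h1, coeff_X_mul_pderiv, Finsupp.add_apply, Finsupp.single_eq_same]
  push_cast
  ring

lemma tdeg_pderiv {q : P2} {n : ℕ} (hq : q.totalDegree ≤ n + 1) (i : Fin 2) :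
    (pderiv i q).totalDegree ≤ n := by
  rw [tdeg_le]
  intro d hd
  rw [coeff_pderiv] at hd
  have h2 : coeff (Finsupp.single i 1 + d) q ≠ 0 := fun h => hd (by rw [h, zero_mul])
  have h3 := tdeg_le.1 hq _ h2
  have h4 : (Finsupp.single i (1:ℕ)) 0 + (Finsupp.single i (1:ℕ)) 1 = 1 := by
    fin_cases i <;> simp
  simp only [Finsupp.add_apply] at h3
  omega

/-- Euler's identity for homogeneous polynomials. -/
lemma euler {f : P2} {m : ℕ} (hf : f.IsHomogeneous m) :
    X 0 * pderiv 0 f + X 1 * pderiv 1 f = (m : ℝ) • f := by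
  ext d
  rw [coeff_add, coeff_X_mul_pderiv, coeff_X_mul_pderiv, coeff_smul]
  rcases eq_or_ne (coeff d f) 0 with h | h
  · rw [h]; simp
  · have : d.degree = m := by_contra fun hc => h (hf.coeff_eq_zero hc)
    rw [ddeg] at this
    rw [← this, smul_eq_mul]
    push_cast
    ring

lemma euler_zero {q : P2} (h : X 0 * pderiv 0 q + X 1 * pderiv 1 q = 0) (i : Fin 2) :
    pderiv i q = 0 := by
  have hq : q = C (coeff 0 q) := by
    ext d
    rcases eq_or_ne d 0 with rfl | hd
    · simp
    · have := congrArg (coeff d) h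
      rw [coeff_add, coeff_X_mul_pderiv, coeff_X_mul_pderiv, coeff_zero, ← mul_add] at this
      have hne : ((d 0 : ℝ) + d 1) ≠ 0 := by
        have : d 0 ≠ 0 ∨ d 1 ≠ 0 := by
          by_contra hc
          push_neg at hc
          exact hd (Finsupp.ext fun j => by fin_cases j <;> simp [hc.1, hc.2])
        have h5 : ((d 0 + d 1 : ℕ) : ℝ) ≠ 0 := Nat.cast_ne_zero.2 (by omega)
        push_cast at h5
        exact h5
      rw [coeff_C, if_neg (Ne.symm hd)]
      exact (mul_eq_zero.1 this).resolve_right hne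
  rw [hq, pderiv_C]

lemma X_dvd_of_coeff {g : P2} (h : ∀ d : Fin 2 →₀ ℕ, d 0 = 0 → coeff d g = 0) :
    X 0 ∣ g := by
  conv_rhs => rw [← support_sum_monomial_coeff g]
  apply Finset.dvd_sum
  intro d hd
  rw [X_dvd_monomial]
  right
  intro hd0
  exact mem_support_iff.1 hd (h d hd0)

/-- `ℙ_n`, polynomials of total degree ≤ n, with `ℙ_n = {0}` for `n < 0`. -/
def Pdeg2 (n : ℤ) : Submodule ℝ P2 :=
  if n < 0 then ⊥ else restrictTotalDegree (Fin 2) ℝ n.toNat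

/-- `(ℙ_s)²`. -/
def Ps2vec (s : ℕ) : Submodule ℝ (Fin 2 → P2) :=
  Submodule.pi Set.univ (fun _ => Pdeg2 s)

def pd2 (i : Fin 2) : P2 →ₗ[ℝ] P2 := (pderiv i : Derivation ℝ P2 P2).toLinearMap

/-- `grad q = (∂q/∂x₁, ∂q/∂x₂)` as a linear map. -/
def gradLM : P2 →ₗ[ℝ] (Fin 2 → P2) := LinearMap.pi ![pd2 0, pd2 1]

/-- `p ↦ (x ↦ p(x)·x^⊥)` with `x^⊥ = (-x₂, x₁)`, as a linear map. -/
def xPerpMulLM : P2 →ₗ[ℝ] (Fin 2 → P2) :=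
  LinearMap.pi ![-(LinearMap.mulLeft ℝ (X 1 : P2)), LinearMap.mulLeft ℝ (X 0)]

lemma gradLM_apply (q : P2) : gradLM q = ![pderiv 0 q, pderiv 1 q] := by
  funext i
  fin_cases i <;> rfl

lemma xPerpMulLM_apply (p : P2) : xPerpMulLM p = ![-(X 1 * p), X 0 * p] := by
  funext i
  fin_cases i <;> rfl

lemma mem_Pdeg2_of_nonneg {n : ℤ} (hn : 0 ≤ n) {p : P2} :
    p ∈ Pdeg2 n ↔ p.totalDegree ≤ n.toNat := by
  rw [Pdeg2, if_neg (not_lt.2 hn), mem_restrictTotalDegree]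

lemma Pdeg2_mono {m n : ℤ} (h : m ≤ n) : Pdeg2 m ≤ Pdeg2 n := by
  rcases lt_or_ge m 0 with hm | hm
  · rw [Pdeg2, if_pos hm]; exact bot_le
  · intro p hp
    rw [mem_Pdeg2_of_nonneg hm] at hp
    rw [mem_Pdeg2_of_nonneg (hm.trans h)]
    exact hp.trans (Int.toNat_le_toNat h)

lemma homog_decomp (k : ℕ) (v : Fin 2 → P2) (hv : ∀ i, (v i).IsHomogeneous k) :
    ∃ q p : P2, q ∈ Pdeg2 ((k : ℤ) + 1) ∧ p ∈ Pdeg2 ((k : ℤ) - 1) ∧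
      v = gradLM q + xPerpMulLM p := by
  set f : P2 := X 0 * v 0 + X 1 * v 1 with hf_def
  have hf : f.IsHomogeneous (k + 1) := by
    rw [Nat.add_comm]
    exact ((isHomogeneous_X ℝ 0).mul (hv 0)).add ((isHomogeneous_X ℝ 1).mul (hv 1))
  set c : ℝ := ((k : ℝ) + 1)⁻¹ with hc_def
  set q : P2 := C c * f with hq_def
  have hc : c * ((k : ℝ) + 1) = 1 := inv_mul_cancel₀ (by positivity)
  have heuler : X 0 * pderiv 0 f + X 1 * pderiv 1 f = C (((k + 1 : ℕ) : ℝ)) * f := by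
    rw [← smul_eq_C_mul]; exact euler hf
  have hEq : X 0 * pderiv 0 q + X 1 * pderiv 1 q = f := by
    rw [hq_def, pderiv_C_mul, pderiv_C_mul]
    calc X 0 * (C c * pderiv 0 f) + X 1 * (C c * pderiv 1 f)
        = C c * (X 0 * pderiv 0 f + X 1 * pderiv 1 f) := by ring
      _ = C c * (C ((k + 1 : ℕ) : ℝ) * f) := by rw [heuler]
      _ = C (c * ((k : ℝ) + 1)) * f := by push_cast; rw [map_mul]; ring
      _ = f := by rw [hc, map_one, one_mul]
  set w : Fin 2 → P2 := fun i => v i - pderiv i q with hw_def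
  have hw : X 0 * w 0 + X 1 * w 1 = 0 := by
    show X 0 * (v 0 - pderiv 0 q) + X 1 * (v 1 - pderiv 1 q) = 0
    have : X 0 * (v 0 - pderiv 0 q) + X 1 * (v 1 - pderiv 1 q) =
        (X 0 * v 0 + X 1 * v 1) - (X 0 * pderiv 0 q + X 1 * pderiv 1 q) := by ring
    rw [this, hEq, ← hf_def, sub_self]
  have hcoeff : ∀ d : Fin 2 →₀ ℕ, d 0 = 0 → coeff d (w 1) = 0 := by
    intro e he
    have h1 : X 1 * w 1 = X 0 * (-(w 0)) := by linear_combination hw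
    have h2 : coeff e (w 1) = coeff (Finsupp.single 1 1 + e) (X 1 * w 1) :=
      (coeff_X_mul e 1 (w 1)).symm
    rw [h2, h1, coeff_X_mul', if_neg]
    simp [Finsupp.mem_support_iff, Finsupp.single_apply, he]
  obtain ⟨p, hp⟩ := X_dvd_of_coeff hcoeff
  have hw0 : w 0 = -(X 1 * p) := by
    have hX : (X 0 : P2) ≠ 0 := X_ne_zero 0
    apply mul_left_cancel₀ hX
    linear_combination hw - X 1 * hp
  have hdq : q.totalDegree ≤ k + 1 := by
    refine (totalDegree_mul _ _).trans ?_
    simpa [totalDegree_C] using hf.totalDegree_le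
  have hdw1 : (w 1).totalDegree ≤ k := by
    refine (totalDegree_sub _ _).trans ?_
    exact max_le ((hv 1).totalDegree_le) (tdeg_pderiv hdq 1)
  have hpc : ∀ d : Fin 2 →₀ ℕ, coeff d p ≠ 0 → d 0 + d 1 + 1 ≤ k := by
    intro d hd
    have h1 : coeff (Finsupp.single 0 1 + d) (w 1) ≠ 0 := by rw [hp, coeff_X_mul]; exact hd
    have h2 := tdeg_le.1 hdw1 _ h1
    have hs : (Finsupp.single (0 : Fin 2) (1 : ℕ)) 0 = 1 ∧
        (Finsupp.single (0 : Fin 2) (1 : ℕ)) 1 = 0 := by constructor <;> simp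
    simp only [Finsupp.add_apply] at h2
    omega
  refine ⟨q, p, ?_, ?_, ?_⟩
  · rw [mem_Pdeg2_of_nonneg (by positivity)]
    have : ((k : ℤ) + 1).toNat = k + 1 := by omega
    rw [this]; exact hdq
  · rcases eq_or_ne p 0 with rfl | hp0
    · exact Submodule.zero_mem _
    · obtain ⟨d, hd⟩ := ne_zero_iff.1 hp0
      have h1 := hpc d hd
      rw [mem_Pdeg2_of_nonneg (by omega)]
      have h3 : ((k : ℤ) - 1).toNat = k - 1 := by omega
      rw [h3, tdeg_le]
      intro e he
      have := hpc e he
      omega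
  · funext i
    rw [Pi.add_apply, gradLM_apply, xPerpMulLM_apply]
    fin_cases i
    · show v 0 = pderiv 0 q + -(X 1 * p)
      rw [← hw0]
      show v 0 = pderiv 0 q + (v 0 - pderiv 0 q)
      ring
    · show v 1 = pderiv 1 q + X 0 * p
      rw [← hp]
      show v 1 = pderiv 1 q + (v 1 - pderiv 1 q)
      ring

/-- `(ℙ_s)² = grad(ℙ_{s+1}) ⊕ x^⊥·ℙ_{s-1}` (internal direct sum). -/
theorem stmt3 (s : ℕ) :
    (Submodule.map gradLM (Pdeg2 (s + 1))) ⊓ (Submodule.map xPerpMulLM (Pdeg2 (s - 1))) = ⊥ ∧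
    (Submodule.map gradLM (Pdeg2 (s + 1))) ⊔ (Submodule.map xPerpMulLM (Pdeg2 (s - 1))) =
      Ps2vec s := by
  constructor
  · rw [eq_bot_iff]
    rintro x ⟨⟨q, hq, rfl⟩, p, hp, hxp⟩
    rw [gradLM_apply] at hxp ⊢
    rw [xPerpMulLM_apply] at hxp
    have h0 : pderiv (0 : Fin 2) q = -(X 1 * p) := by
      have := congrFun hxp 0; simpa using this.symm
    have h1 : pderiv (1 : Fin 2) q = X 0 * p := by
      have := congrFun hxp 1; simpa using this.symm
    have hE : X 0 * pderiv 0 q + X 1 * pderiv 1 q = 0 := by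
      rw [h0, h1]; ring
    rw [Submodule.mem_bot]
    rw [euler_zero hE 0, euler_zero hE 1]
    funext i
    fin_cases i <;> simp
  · apply le_antisymm
    · apply sup_le
      · rintro x ⟨q, hq, rfl⟩
        rw [SetLike.mem_coe] at hq
        rw [mem_Pdeg2_of_nonneg (by positivity)] at hq
        have hq' : q.totalDegree ≤ s + 1 := by
          have h : ((s : ℤ) + 1).toNat = s + 1 := by omega
          rwa [h] at hq
        rw [Ps2vec, Submodule.mem_pi]
        intro i _
        rw [gradLM_apply]
        have hmem : ∀ j : Fin 2, pderiv j q ∈ Pdeg2 (s : ℤ) := by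
          intro j
          rw [mem_Pdeg2_of_nonneg (by positivity)]
          have h : ((s : ℤ)).toNat = s := by omega
          rw [h]
          exact tdeg_pderiv hq' j
        fin_cases i
        · exact hmem 0
        · exact hmem 1
      · rintro x ⟨p, hp, rfl⟩
        rw [SetLike.mem_coe] at hp
        rw [Ps2vec, Submodule.mem_pi]
        intro i _
        rcases eq_or_ne p 0 with rfl | hp0
        · rw [map_zero]
          exact Submodule.zero_mem _
        · have hs1 : ¬ ((s : ℤ) - 1 < 0) := by
            intro hlt
            rw [Pdeg2, if_pos hlt, Submodule.mem_bot] at hp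
            exact hp0 hp
          have hs : 1 ≤ s := by omega
          rw [mem_Pdeg2_of_nonneg (by omega)] at hp
          have h : ((s : ℤ) - 1).toNat = s - 1 := by omega
          rw [h] at hp
          have hd : ∀ j : Fin 2, (X j * p).totalDegree ≤ s := by
            intro j
            refine (totalDegree_mul _ _).trans ?_
            rw [totalDegree_X]
            omega
          rw [xPerpMulLM_apply]
          have hmem : ∀ g : P2, g.totalDegree ≤ s → g ∈ Pdeg2 (s : ℤ) := by
            intro g hg
            rw [mem_Pdeg2_of_nonneg (by positivity)]
            have h : ((s : ℤ)).toNat = s := by omega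
            rwa [h]
          fin_cases i
          · exact hmem (-(X 1 * p)) (by rw [totalDegree_neg]; exact hd 1)
          · exact hmem (X 0 * p) (hd 0)
    · intro v hv
      rw [Ps2vec, Submodule.mem_pi] at hv
      have hvd : ∀ i, (v i).totalDegree ≤ s := by
        intro i
        have h := hv i (Set.mem_univ i)
        rw [mem_Pdeg2_of_nonneg (by positivity)] at h
        have h2 : ((s : ℤ)).toNat = s := by omega
        rwa [h2] at h
      have hsum : v = ∑ k ∈ Finset.range (s + 1),
          (fun i => homogeneousComponent k (v i)) := by
        funext i
        rw [Finset.sum_apply]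
        rw [← Finset.sum_subset (Finset.range_subset_range.2
          (by have := hvd i; omega : (v i).totalDegree + 1 ≤ s + 1))
          (fun k _ hk => homogeneousComponent_eq_zero k (v i)
            (by rw [Finset.mem_range, not_lt] at hk; omega))]
        exact (sum_homogeneousComponent (v i)).symm
      rw [hsum]
      apply Submodule.sum_mem
      intro k hk
      rw [Finset.mem_range] at hk
      obtain ⟨q, p, hq, hp, heq⟩ := homog_decomp k _
        (fun i => homogeneousComponent_isHomogeneous k (v i))
      rw [heq]
      exact Submodule.add_mem _
        (Submodule.mem_sup_left (Submodule.mem_map_of_mem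
          (Pdeg2_mono (by omega) hq)))
        (Submodule.mem_sup_right (Submodule.mem_map_of_mem
          (Pdeg2_mono (by omega) hp)))
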